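/- Let z < y be real numbers, let x : S → ℝ be positions with z ≤ x_i ≤ y for all i ∈ S, and suppose there is a subset T ⊆ S with |T| ≥ |S|/2 such that |x_i − z| ≤ |x_i − y| for all i ∈ T. Then ∑_{i∈S} |x_i − z| ≤ (3/4)·|S|·(y − z) and ∑_{i∈S} |x_i − y| ≥ (1/4)·|S|·(y − z). -/

import Mathlib

theorem stmt_5 {ι : Type*} (S T : Finset ι) (x : ι → ℝ) (z y : ℝ)
    (hzy : z < y)
    (hx : ∀ i ∈ S, z ≤ x i ∧ x i ≤ y)
    (hTS : T ⊆ S)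
    (hTcard : (T.card : ℝ) ≥ (S.card : ℝ) / 2)
    (hT : ∀ i ∈ T, |x i - z| ≤ |x i - y|) :
    ∑ i ∈ S, |x i - z| ≤ (3/4) * (S.card : ℝ) * (y - z) ∧
    ∑ i ∈ S, |x i - y| ≥ (1/4) * (S.card : ℝ) * (y - z) := by
  classical
  have habs : ∀ i ∈ S, |x i - z| = x i - z ∧ |x i - y| = y - x i := by
    intro i hi
    obtain ⟨h1, h2⟩ := hx i hi
    constructor
    · rw [abs_of_nonneg (by linarith)]
    · rw [abs_of_nonpos (by linarith)]; ring
  have hcardTS : (T.card : ℝ) ≤ S.card := by exact_mod_cast Finset.card_le_card hTS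
  have hsum1 : ∑ i ∈ S, |x i - z| ≤ (3/4) * (S.card : ℝ) * (y - z) := by
    have hsplit : ∑ i ∈ S, |x i - z| = ∑ i ∈ T, |x i - z| + ∑ i ∈ S \ T, |x i - z| := by
      rw [← Finset.sum_sdiff hTS]; ring
    have hTbound : ∑ i ∈ T, |x i - z| ≤ (T.card : ℝ) * ((y - z) / 2) := by
      rw [← nsmul_eq_mul, ← Finset.sum_const]
      apply Finset.sum_le_sum
      intro i hi
      have hiS := hTS hi
      obtain ⟨e1, e2⟩ := habs i hiS
      have := hT i hi
      rw [e1, e2] at this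
      linarith
    have hDbound : ∑ i ∈ S \ T, |x i - z| ≤ ((S \ T).card : ℝ) * (y - z) := by
      rw [← nsmul_eq_mul, ← Finset.sum_const]
      apply Finset.sum_le_sum
      intro i hi
      have hiS : i ∈ S := (Finset.mem_sdiff.mp hi).1
      obtain ⟨e1, _⟩ := habs i hiS
      obtain ⟨h1, h2⟩ := hx i hiS
      rw [e1]; linarith
    have hcardD : ((S \ T).card : ℝ) = (S.card : ℝ) - T.card := by
      rw [Finset.card_sdiff_of_subset hTS]
      have h := Finset.card_le_card hTS
      push_cast [Nat.cast_sub h]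
      ring
    rw [hsplit]
    rw [hcardD] at hDbound
    nlinarith
  refine ⟨hsum1, ?_⟩
  have hsum2 : ∑ i ∈ S, |x i - y| = (S.card : ℝ) * (y - z) - ∑ i ∈ S, |x i - z| := by
    rw [← nsmul_eq_mul, ← Finset.sum_const, ← Finset.sum_sub_distrib]
    apply Finset.sum_congr rfl
    intro i hi
    obtain ⟨e1, e2⟩ := habs i hi
    rw [e1, e2]; ring
  rw [hsum2]; linarith
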